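/- arXiv:1312.2226 — 4 statements merged into one kernel-verified Lean document; each statement's English description precedes it below -/
import Mathlib

section
/- Let (U, S) be a Set-Cover instance with U a finite nonempty universe and S = {S_1, …, S_m} a family of subsets of U with ⋃_{i=1}^m S_i = U, and let A(U, S) be the automaton with state set U ∪ {q̂} (q̂ ∉ U), alphabet {a_1, …, a_m}, and δ(u, a_i) = q̂ if u ∈ S_i, δ(u, a_i) = u if u ∉ S_i, and δ(q̂, a_i) = q̂ for all i. Then A(U, S) is synchronizing and its reset threshold rt(A(U, S)) equals OPT(U, S), the minimum cardinality of a subfamily C ⊆ S with ⋃_{T ∈ C} T = U; moreover A(U, S) has |U| + 1 states and |S| letters. -/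
/-- The action of a word `w` on a state `q` in the DFA with transition function `δ`. -/
def wordAct {Q A : Type*} (δ : Q → A → Q) (q : Q) (w : List A) : Q :=
  w.foldl δ q

/-- `w` is a reset word: it sends all states to one common state. -/
def IsResetWord {Q A : Type*} (δ : Q → A → Q) (w : List A) : Prop :=
  ∀ p q : Q, wordAct δ p w = wordAct δ q w

/-- A DFA is synchronizing if it admits a reset word. -/
def Synchronizing {Q A : Type*} (δ : Q → A → Q) : Prop :=
  ∃ w : List A, IsResetWord δ w

/-- The reset threshold: the minimum length of a reset word. -/
noncomputable def resetThreshold {Q A : Type*} (δ : Q → A → Q) : ℕ :=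
  sInf {n : ℕ | ∃ w : List A, w.length = n ∧ IsResetWord δ w}

/-- The Set-Cover automaton `A(U, S)`: states are `U ∪ {q̂}` (with `none` playing
the role of the sink state `q̂`), and the letter `a_i` sends `u` to `q̂` if `u ∈ S i`
and fixes `u` otherwise; `q̂` is fixed by all letters. -/
def scAut {U : Type*} [DecidableEq U] {m : ℕ} (S : Fin m → Finset U) :
    Option U → Fin m → Option U
  | none, _ => none
  | some u, i => if u ∈ S i then none else some u

/-- The minimum cardinality of a subfamily of `S` covering the universe. -/
noncomputable def setCoverOPT {U : Type*} {m : ℕ} (S : Fin m → Finset U) : ℕ :=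
  sInf {c : ℕ | ∃ C : Finset (Fin m), C.card = c ∧ ∀ u : U, ∃ i ∈ C, u ∈ S i}


lemma scAut_act_none {U : Type*} [DecidableEq U] {m : ℕ} (S : Fin m → Finset U)
    (w : List (Fin m)) : wordAct (scAut S) none w = none := by
  induction w with
  | nil => rfl
  | cons a w ih => simpa [wordAct, scAut] using ih

lemma scAut_act_some {U : Type*} [DecidableEq U] {m : ℕ} (S : Fin m → Finset U)
    (u : U) (w : List (Fin m)) :
    wordAct (scAut S) (some u) w = none ↔ ∃ i ∈ w, u ∈ S i := by
  induction w with
  | nil => simp [wordAct]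
  | cons a w ih =>
    by_cases h : u ∈ S a
    · simp only [wordAct, List.foldl_cons, scAut, if_pos h]
      have := scAut_act_none S w
      simp only [wordAct] at this
      simp [this, h]
    · simp only [wordAct, List.foldl_cons, scAut, if_neg h]
      simp only [wordAct] at ih
      simp [ih, h]

lemma scAut_reset_iff {U : Type*} [DecidableEq U] {m : ℕ} (S : Fin m → Finset U)
    (w : List (Fin m)) :
    IsResetWord (scAut S) w ↔ ∀ u : U, ∃ i ∈ w, u ∈ S i := by
  constructor
  · intro h u
    have := h (some u) none
    rw [scAut_act_none] at this
    exact (scAut_act_some S u w).mp this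
  · intro h p q
    have key : ∀ r : Option U, wordAct (scAut S) r w = none := by
      intro r
      cases r with
      | none => exact scAut_act_none S w
      | some u => exact (scAut_act_some S u w).mpr (h u)
    rw [key p, key q]

/-- The Set-Cover automaton of a Set-Cover instance `(U, S)` (with `S` covering `U`)
is synchronizing, its reset threshold equals `OPT(U, S)`, it has `|U| + 1` states
and `|S| = m` letters. -/
theorem scAut_resetThreshold_eq_OPT {U : Type*} [Fintype U] [DecidableEq U]
    [Nonempty U] {m : ℕ} (S : Fin m → Finset U) (hcover : ∀ u : U, ∃ i, u ∈ S i) :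
    Synchronizing (scAut S) ∧
    resetThreshold (scAut S) = setCoverOPT S ∧
    Fintype.card (Option U) = Fintype.card U + 1 ∧
    Fintype.card (Fin m) = m := by
  have hAne : {n : ℕ | ∃ w : List (Fin m), w.length = n ∧ IsResetWord (scAut S) w}.Nonempty := by
    refine ⟨(Finset.univ : Finset (Fin m)).toList.length, (Finset.univ : Finset (Fin m)).toList, rfl, ?_⟩
    rw [scAut_reset_iff]
    intro u
    obtain ⟨i, hi⟩ := hcover u
    exact ⟨i, by simp, hi⟩
  have hBne : {c : ℕ | ∃ C : Finset (Fin m), C.card = c ∧ ∀ u : U, ∃ i ∈ C, u ∈ S i}.Nonempty := by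
    refine ⟨(Finset.univ : Finset (Fin m)).card, Finset.univ, rfl, ?_⟩
    intro u
    obtain ⟨i, hi⟩ := hcover u
    exact ⟨i, Finset.mem_univ i, hi⟩
  refine ⟨?_, ?_, ?_, ?_⟩
  · obtain ⟨n, w, _, hw⟩ := hAne
    exact ⟨w, hw⟩
  · apply le_antisymm
    · -- resetThreshold ≤ OPT : from a minimal cover make a word
      obtain ⟨C, hCcard, hCcov⟩ := Nat.sInf_mem hBne
      apply Nat.sInf_le
      refine ⟨C.toList, by rw [Finset.length_toList, hCcard]; rfl, ?_⟩
      rw [scAut_reset_iff]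
      intro u
      obtain ⟨i, hiC, hiu⟩ := hCcov u
      exact ⟨i, (Finset.mem_toList).mpr hiC, hiu⟩
    · -- OPT ≤ resetThreshold : from a minimal reset word make a cover
      obtain ⟨w, hwlen, hw⟩ := Nat.sInf_mem hAne
      rw [scAut_reset_iff] at hw
      have : setCoverOPT S ≤ w.toFinset.card := by
        apply Nat.sInf_le
        refine ⟨w.toFinset, rfl, ?_⟩
        intro u
        obtain ⟨i, hiw, hiu⟩ := hw u
        exact ⟨i, List.mem_toFinset.mpr hiw, hiu⟩
      calc setCoverOPT S ≤ w.toFinset.card := this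
        _ ≤ w.length := w.toFinset_card_le
        _ = resetThreshold (scAut S) := hwlen
  · simp
  · simp
end

section
/- For every synchronizing complete deterministic finite automaton A = (Q, Σ, δ) with |Σ| = m ≥ 2 letters there exists a synchronizing 2-letter automaton B = (Q', {0, 1}, δ') such that rt(A) · ⌈log₂ m + 1⌉ ≤ rt(B) ≤ ⌈log₂ m + 1⌉ · (1 + rt(A)) and |Q'| ≤ 2 m |Q|. -/
namespace TLE

/-- ceiling of m / 2^(c+1-d): number of valid buffer nodes at depth d -/
def cnt (m c d : ℕ) : ℕ := (m + 2^(c+1-d) - 1) / 2^(c+1-d)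

lemma cnt_eq (m c d : ℕ) (hm : 1 ≤ m) : cnt m c d = (m-1)/2^(c+1-d) + 1 := by
  unfold cnt
  rw [show m + 2^(c+1-d) - 1 = (m-1) + 2^(c+1-d) by
    have := Nat.one_le_two_pow (n := c+1-d); omega]
  exact Nat.add_div_right _ (Nat.pow_pos (by norm_num))

lemma cnt_pos (m c d : ℕ) (hm : 1 ≤ m) : 0 < cnt m c d := by
  rw [cnt_eq m c d hm]; exact Nat.succ_pos _

lemma cnt_le (m c d : ℕ) (hm : 1 ≤ m) : cnt m c d ≤ m := by
  rw [cnt_eq m c d hm]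
  have := Nat.div_le_self (m-1) (2^(c+1-d)); omega

lemma lt_cnt (m c k a : ℕ) (hm : 1 ≤ m) (ha : a < m) (hk : k ≤ c+1) :
    a / 2^k < cnt m c (c+1-k) := by
  rw [cnt_eq m c _ hm, show c+1-(c+1-k) = k by omega]
  have : a / 2^k ≤ (m-1) / 2^k := Nat.div_le_div_right (by omega)
  omega

abbrev Buf (m c : ℕ) : Type := {x : Fin (c+1) × Fin m // x.2.1 < cnt m c x.1.1}

def depth {m c : ℕ} (s : Buf m c) : ℕ := s.1.1.1
def bval {m c : ℕ} (s : Buf m c) : ℕ := s.1.2.1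

lemma depth_lt {m c : ℕ} (s : Buf m c) : depth s < c + 1 := s.1.1.isLt

def bitv (b : Bool) : ℕ := cond b 1 0

variable (m c : ℕ) (hm : 0 < m)

def rootB : Buf m c := ⟨(⟨0, Nat.succ_pos c⟩, ⟨0, hm⟩), cnt_pos m c 0 hm⟩

def bufStep (s : Buf m c) (b : Bool) : Buf m c :=
  if hd : depth s < c then
    if hv : 2 * bval s + bitv b < cnt m c (depth s + 1) then
      ⟨(⟨depth s + 1, by omega⟩,
        ⟨2 * bval s + bitv b, lt_of_lt_of_le hv (cnt_le m c _ hm)⟩), hv⟩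
    else rootB m c hm
  else rootB m c hm

def outp (s : Buf m c) (b : Bool) : Option (Fin m) :=
  if depth s = c then
    (if ha : 2 * bval s + bitv b < m then some ⟨_, ha⟩ else none)
  else none

variable {Q : Type}

def stepB (δ : Q → Fin m → Q) (x : Q × Buf m c) (b : Bool) : Q × Buf m c :=
  ((outp m c x.2 b).elim x.1 (δ x.1), bufStep m c hm x.2 b)

def emit : Buf m c → List Bool → List (Fin m)
  | _, [] => []
  | s, b :: w => (outp m c s b).toList ++ emit (bufStep m c hm s b) w

lemma sim (δ : Q → Fin m → Q) :
    ∀ (w : List Bool) (q : Q) (s : Buf m c),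
      List.foldl (stepB m c hm δ) (q, s) w
        = (List.foldl δ q (emit m c hm s w), List.foldl (bufStep m c hm) s w)
  | [], q, s => rfl
  | b :: w, q, s => by
    rw [List.foldl_cons, List.foldl_cons, show stepB m c hm δ (q, s) b
      = ((outp m c s b).elim q (δ q), bufStep m c hm s b) from rfl,
      sim δ w _ _, emit]
    cases h : outp m c s b <;> simp [h]

lemma outp_some {s : Buf m c} {b : Bool} {a : Fin m} (h : outp m c s b = some a) :
    depth s = c := by
  unfold outp at h
  by_cases hd : depth s = c
  · exact hd
  · simp [hd] at h

lemma depth_bufStep (s : Buf m c) (b : Bool) :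
    bufStep m c hm s b = rootB m c hm ∨ depth (bufStep m c hm s b) = depth s + 1 := by
  unfold bufStep
  split
  · split
    · right; rfl
    · left; rfl
  · left; rfl

lemma bufStep_of_depth_eq {s : Buf m c} (b : Bool) (h : depth s = c) :
    bufStep m c hm s b = rootB m c hm := by
  unfold bufStep
  rw [dif_neg (by omega)]

lemma depth_rootB : depth (rootB m c hm) = 0 := rfl

lemma emit_len : ∀ (w : List Bool) (s : Buf m c),
    (c+1) * (emit m c hm s w).length ≤ depth s + w.length
  | [], s => by simp [emit]
  | b :: w, s => by
    rw [emit]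
    cases h : outp m c s b with
    | none =>
      simp only [Option.toList_none, List.nil_append, List.length_cons]
      have h1 := emit_len w (bufStep m c hm s b)
      rcases depth_bufStep m c hm s b with h2 | h2
      · have h3 : depth (bufStep m c hm s b) = 0 := by rw [h2]; rfl
        omega
      · omega
    | some a =>
      have hd := outp_some m c (b := b) h
      have hroot := bufStep_of_depth_eq m c hm b hd
      have h1 := emit_len w (bufStep m c hm s b)
      have h3 : depth (bufStep m c hm s b) = 0 := by rw [hroot]; rfl
      simp only [Option.toList_some, List.singleton_append, List.length_cons]
      rw [Nat.mul_add, Nat.mul_one]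
      omega

include hm in
lemma cnt_one (hmc : m ≤ 2^c) : cnt m c 1 = 1 := by
  rw [cnt_eq m c 1 hm, show c+1-1 = c by omega, Nat.div_eq_of_lt (by omega)]

lemma bufStep_root_true (hc : 0 < c) (hmc : m ≤ 2^c) :
    bufStep m c hm (rootB m c hm) true = rootB m c hm := by
  have hfalse : ¬ (2 * bval (rootB m c hm) + bitv true
      < cnt m c (depth (rootB m c hm) + 1)) := by
    rw [show bval (rootB m c hm) = 0 from rfl, show depth (rootB m c hm) = 0 from rfl,
      cnt_one m c hm hmc]
    simp [bitv]
  unfold bufStep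
  rw [dif_pos (by rw [depth_rootB]; omega), dif_neg hfalse]

lemma foldl_root_true (hc : 0 < c) (hmc : m ≤ 2^c) (k : ℕ) :
    List.foldl (bufStep m c hm) (rootB m c hm) (List.replicate k true) = rootB m c hm := by
  induction k with
  | zero => rfl
  | succ k ih =>
    rw [List.replicate_succ, List.foldl_cons, bufStep_root_true m c hm hc hmc, ih]

lemma flush (hc : 0 < c) (hmc : m ≤ 2^c) :
    ∀ (k : ℕ) (s : Buf m c), c + 1 ≤ depth s + k →
      List.foldl (bufStep m c hm) s (List.replicate k true) = rootB m c hm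
  | 0, s, hk => by have := depth_lt s; omega
  | k+1, s, hk => by
    rw [List.replicate_succ, List.foldl_cons]
    rcases depth_bufStep m c hm s true with h2 | h2
    · rw [h2]; exact foldl_root_true m c hm hc hmc k
    · exact flush hc hmc k _ (by omega)

def codeAux (a : ℕ) : ℕ → List Bool
  | 0 => []
  | k+1 => (decide ((a / 2^k) % 2 = 1)) :: codeAux a k

lemma codeAux_length (a : ℕ) : ∀ k, (codeAux a k).length = k
  | 0 => rfl
  | k+1 => by rw [codeAux, List.length_cons, codeAux_length a k]

lemma bitv_decide (x : ℕ) : bitv (decide (x % 2 = 1)) = x % 2 := by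
  rcases Nat.mod_two_eq_zero_or_one x with h | h <;> simp [bitv, h]

lemma code_run (hc : 0 < c) :
    ∀ (k : ℕ), 1 ≤ k → k ≤ c+1 → ∀ (a : Fin m) (s : Buf m c),
      depth s = c+1-k → bval s = a.1/2^k →
      List.foldl (bufStep m c hm) s (codeAux a.1 k) = rootB m c hm ∧
        emit m c hm s (codeAux a.1 k) = [a] := by
  intro k
  induction k with
  | zero => omega
  | succ k ih =>
    intro _ hk a s hdep hval
    rcases Nat.eq_zero_or_pos k with hk0 | hk1
    · -- base case : k+1 = 1
      subst hk0
      have hdc : depth s = c := by omega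
      have hvv : 2 * bval s + bitv (decide (a.1 / 2^0 % 2 = 1)) = a.1 := by
        rw [bitv_decide, hval, pow_zero, pow_one, Nat.div_one]
        exact Nat.div_add_mod a.1 2
      have hout : outp m c s (decide (a.1 / 2^0 % 2 = 1)) = some a := by
        unfold outp
        rw [if_pos hdc, dif_pos (by rw [hvv]; exact a.isLt)]
        congr 1
        exact Fin.ext hvv
      have hbs : bufStep m c hm s (decide (a.1 / 2^0 % 2 = 1)) = rootB m c hm :=
        bufStep_of_depth_eq m c hm _ hdc
      constructor
      · rw [codeAux, codeAux, List.foldl_cons, List.foldl_nil, hbs]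
      · rw [codeAux, codeAux, emit, emit, hout]
        simp
    · -- inductive step
      have hkc : k ≤ c := by omega
      have hdlt : depth s < c := by omega
      have hdiv : a.1 / 2^(k+1) = (a.1 / 2^k) / 2 := by
        rw [Nat.div_div_eq_div_mul, ← pow_succ]
      have hvv : 2 * bval s + bitv (decide (a.1 / 2^k % 2 = 1)) = a.1 / 2^k := by
        rw [bitv_decide, hval, hdiv]
        exact Nat.div_add_mod _ 2
      have hcnt : 2 * bval s + bitv (decide (a.1 / 2^k % 2 = 1))
          < cnt m c (depth s + 1) := by
        rw [hvv, hdep, show c+1-(k+1)+1 = c+1-k by omega]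
        exact lt_cnt m c k a.1 hm a.isLt (by omega)
      have hout : outp m c s (decide (a.1 / 2^k % 2 = 1)) = none := by
        unfold outp
        rw [if_neg (by omega)]
      have hbs : bufStep m c hm s (decide (a.1 / 2^k % 2 = 1))
          = ⟨(⟨depth s + 1, by omega⟩,
            ⟨2 * bval s + bitv (decide (a.1 / 2^k % 2 = 1)),
              lt_of_lt_of_le hcnt (cnt_le m c _ hm)⟩), hcnt⟩ := by
        unfold bufStep
        rw [dif_pos hdlt, dif_pos hcnt]
      have hih := ih hk1 (by omega) a
        (⟨(⟨depth s + 1, by omega⟩,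
            ⟨2 * bval s + bitv (decide (a.1 / 2^k % 2 = 1)),
              lt_of_lt_of_le hcnt (cnt_le m c _ hm)⟩), hcnt⟩)
        (by show depth s + 1 = c + 1 - k; omega)
        (by show 2 * bval s + bitv (decide (a.1 / 2^k % 2 = 1)) = a.1 / 2^k; exact hvv)
      constructor
      · rw [codeAux, List.foldl_cons, hbs]
        exact hih.1
      · rw [codeAux, emit, hout, hbs]
        simpa using hih.2

def codeW (w : List (Fin m)) : List Bool :=
  (w.map (fun a => codeAux a.1 (c+1))).flatten

lemma codeW_length (w : List (Fin m)) : (codeW m c w).length = (c+1) * w.length := by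
  induction w with
  | nil => simp [codeW]
  | cons a w ih =>
    rw [codeW, List.map_cons, List.flatten_cons, List.length_append, codeAux_length]
    rw [codeW] at ih
    rw [ih, List.length_cons, Nat.mul_add, Nat.mul_one]
    ring

lemma codeW_run (δ : Q → Fin m → Q) (hc : 0 < c) (hmc : m ≤ 2^c) :
    ∀ (w : List (Fin m)) (q : Q),
      List.foldl (stepB m c hm δ) (q, rootB m c hm) (codeW m c w)
        = (List.foldl δ q w, rootB m c hm) := by
  intro w
  induction w with
  | nil => intro q; rfl
  | cons a w ih =>
    intro q
    rw [codeW, List.map_cons, List.flatten_cons, List.foldl_append]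
    have hcode := code_run m c hm hc (c+1) (by omega) (by omega) a (rootB m c hm)
      (by rw [depth_rootB]; omega)
      (by rw [show bval (rootB m c hm) = 0 from rfl,
        Nat.div_eq_of_lt (lt_of_lt_of_le a.isLt (le_trans hmc
          (Nat.pow_le_pow_right (by norm_num) (by omega))))])
    rw [sim m c hm δ (codeAux a.1 (c+1)), hcode.1, hcode.2]
    rw [show List.foldl δ q [a] = δ q a from rfl, List.foldl_cons]
    rw [codeW] at ih
    exact ih (δ q a)

-- cardinality of the buffer
lemma sum_div_le : ∀ (n M : ℕ), (∑ i ∈ Finset.range n, M / 2^(i+1)) ≤ M - M / 2^n := by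
  intro n
  induction n with
  | zero => intro M; simp
  | succ n ih =>
    intro M
    rw [Finset.sum_range_succ]
    have h1 := ih M
    have h2 : M / 2^(n+1) = (M / 2^n) / 2 := by
      rw [Nat.div_div_eq_div_mul, ← pow_succ]
    have h3 : M / 2^n ≤ M := Nat.div_le_self _ _
    omega

lemma sum_cnt_le (hmm : 0 < m) (hcm : c + 1 ≤ m) :
    (∑ j ∈ Finset.range (c+1), cnt m c j) ≤ 2 * m := by
  have h1 : ∀ j ∈ Finset.range (c+1), cnt m c j = (m-1)/2^(c+1-j) + 1 := by
    intro j _; exact cnt_eq m c j hmm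
  rw [Finset.sum_congr rfl h1, Finset.sum_add_distrib, Finset.sum_const,
    Finset.card_range, smul_eq_mul, mul_one]
  have h2 : (∑ j ∈ Finset.range (c+1), (m-1)/2^(c+1-j))
      = ∑ j ∈ Finset.range (c+1), (m-1)/2^(j+1) := by
    rw [← Finset.sum_range_reflect]
    apply Finset.sum_congr rfl
    intro j hj
    rw [Finset.mem_range] at hj
    congr 2
    omega
  rw [h2]
  have h4 : (∑ j ∈ Finset.range (c+1), (m-1)/2^(j+1)) ≤ m - 1 :=
    le_trans (sum_div_le (c+1) (m-1)) (Nat.sub_le _ _)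
  omega

lemma card_buf_le (hmm : 0 < m) (hcm : c + 1 ≤ m) :
    Fintype.card (Buf m c) ≤ 2 * m := by
  have hinj : Function.Injective
      (fun s : Buf m c => (⟨s.1.1, ⟨s.1.2.1, s.2⟩⟩ : Σ d : Fin (c+1), Fin (cnt m c d.1))) := by
    rintro ⟨⟨d1, v1⟩, h1⟩ ⟨⟨d2, v2⟩, h2⟩ h
    simp only [Sigma.mk.inj_iff] at h
    obtain ⟨hd, hv⟩ := h
    subst hd
    rw [heq_eq_eq, Fin.mk.injEq] at hv
    apply Subtype.ext
    simp only [Prod.mk.injEq]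
    exact ⟨trivial, Fin.ext hv⟩
  calc Fintype.card (Buf m c)
      ≤ Fintype.card (Σ d : Fin (c+1), Fin (cnt m c d.1)) :=
        Fintype.card_le_of_injective _ hinj
    _ = ∑ d : Fin (c+1), cnt m c d.1 := by
        rw [Fintype.card_sigma]; simp
    _ = ∑ j ∈ Finset.range (c+1), cnt m c j := Fin.sum_univ_eq_sum_range _ _
    _ ≤ 2 * m := sum_cnt_le m c hmm hcm

end TLE

/-- For every synchronizing DFA with `m ≥ 2` letters there is a synchronizing
2-letter DFA `B` with
`rt(A) · ⌈log₂ m + 1⌉ ≤ rt(B) ≤ ⌈log₂ m + 1⌉ · (1 + rt(A))` and at most `2·m·|Q|`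
states.  (Here `⌈log₂ m + 1⌉ = Nat.clog 2 m + 1`.) -/
theorem exists_two_letter_encoding {Q : Type} [Fintype Q] [Nonempty Q] {m : ℕ}
    (hm : 2 ≤ m) (δ : Q → Fin m → Q) (hsync : Synchronizing δ) :
    ∃ (Q' : Type) (_ : Fintype Q') (δ' : Q' → Bool → Q'),
      Synchronizing δ' ∧
      resetThreshold δ * (Nat.clog 2 m + 1) ≤ resetThreshold δ' ∧
      resetThreshold δ' ≤ (Nat.clog 2 m + 1) * (1 + resetThreshold δ) ∧
      Fintype.card Q' ≤ 2 * m * Fintype.card Q := by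
  classical
  set c := Nat.clog 2 m with hc_def
  have hm1 : 0 < m := by omega
  have hmc : m ≤ 2^c := Nat.le_pow_clog (by norm_num) m
  have hc : 0 < c := by
    by_contra h
    have hc0 : c = 0 := by omega
    rw [hc0, pow_zero] at hmc
    omega
  have hcm : c + 1 ≤ m := by
    have h1 : m - 1 < 2^(m-1) := Nat.lt_two_pow_self
    have h2 : Nat.clog 2 m ≤ m - 1 :=
      (Nat.clog_le_iff_le_pow (by norm_num)).mpr (by omega)
    omega
  set δ' := TLE.stepB m c hm1 δ with hδ'_def
  -- a shortest reset word for δ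
  obtain ⟨wA, hwA⟩ := hsync
  have hAne : {n : ℕ | ∃ w : List (Fin m), w.length = n ∧ IsResetWord δ w}.Nonempty :=
    ⟨wA.length, wA, rfl, hwA⟩
  obtain ⟨w0, hw0len, hw0⟩ := Nat.sInf_mem hAne
  -- the reset word for δ'
  set W := List.replicate (c+1) true ++ TLE.codeW m c w0 with hW_def
  have key : ∀ x : Q × TLE.Buf m c, List.foldl δ' x W
      = (List.foldl δ (List.foldl δ x.1
          (TLE.emit m c hm1 x.2 (List.replicate (c+1) true))) w0, TLE.rootB m c hm1) := by
    intro x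
    rw [hW_def, List.foldl_append]
    have h1 : List.foldl δ' x (List.replicate (c+1) true)
        = (List.foldl δ x.1 (TLE.emit m c hm1 x.2 (List.replicate (c+1) true)),
            TLE.rootB m c hm1) := by
      have h2 := TLE.sim m c hm1 δ (List.replicate (c+1) true) x.1 x.2
      rw [Prod.mk.eta] at h2
      rw [hδ'_def, h2,
        TLE.flush m c hm1 hc hmc (c+1) x.2 (by have := TLE.depth_lt x.2; omega)]
    rw [h1, hδ'_def, TLE.codeW_run m c hm1 δ hc hmc w0 _]
  have hWreset : IsResetWord δ' W := by
    intro p q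
    show List.foldl δ' p W = List.foldl δ' q W
    rw [key p, key q]
    exact congrArg (fun z => (z, TLE.rootB m c hm1)) (hw0 _ _)
  have hsync' : Synchronizing δ' := ⟨W, hWreset⟩
  refine ⟨Q × TLE.Buf m c, inferInstance, δ', hsync', ?_, ?_, ?_⟩
  · -- lower bound
    have hBne : {n : ℕ | ∃ w : List Bool, w.length = n ∧ IsResetWord δ' w}.Nonempty :=
      ⟨W.length, W, rfl, hWreset⟩
    obtain ⟨w', hw'len, hw'⟩ := Nat.sInf_mem hBne
    set u := TLE.emit m c hm1 (TLE.rootB m c hm1) w' with hu_def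
    have hu : IsResetWord δ u := by
      intro p q
      have h1 := hw' (p, TLE.rootB m c hm1) (q, TLE.rootB m c hm1)
      show List.foldl δ p u = List.foldl δ q u
      have h2 := TLE.sim m c hm1 δ w' p (TLE.rootB m c hm1)
      have h3 := TLE.sim m c hm1 δ w' q (TLE.rootB m c hm1)
      have h4 : List.foldl δ' (p, TLE.rootB m c hm1) w'
          = List.foldl δ' (q, TLE.rootB m c hm1) w' := h1
      rw [hδ'_def, h2, h3] at h4
      exact congrArg Prod.fst h4
    have hrtle : resetThreshold δ ≤ u.length := Nat.sInf_le ⟨u, rfl, hu⟩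
    have hlen : (c+1) * u.length ≤ w'.length := by
      have h5 := TLE.emit_len m c hm1 w' (TLE.rootB m c hm1)
      rw [TLE.depth_rootB, ← hu_def] at h5
      omega
    calc resetThreshold δ * (c + 1)
        ≤ u.length * (c+1) := Nat.mul_le_mul_right _ hrtle
      _ = (c+1) * u.length := Nat.mul_comm _ _
      _ ≤ w'.length := hlen
      _ = resetThreshold δ' := hw'len
  · -- upper bound
    have hmemW : W.length ∈ {n : ℕ | ∃ w : List Bool, w.length = n ∧ IsResetWord δ' w} :=
      ⟨W, rfl, hWreset⟩
    have h := Nat.sInf_le hmemW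
    have hlen : W.length = (c+1) + (c+1) * w0.length := by
      rw [hW_def, List.length_append, List.length_replicate, TLE.codeW_length]
    calc resetThreshold δ' ≤ W.length := h
      _ = (c+1) + (c+1) * resetThreshold δ := by rw [hlen, hw0len]; rfl
      _ = (c+1) * (1 + resetThreshold δ) := by ring
  · -- cardinality
    calc Fintype.card (Q × TLE.Buf m c)
        = Fintype.card Q * Fintype.card (TLE.Buf m c) := Fintype.card_prod _ _
      _ ≤ Fintype.card Q * (2 * m) :=
          Nat.mul_le_mul_left _ (TLE.card_buf_le m c hm1 hcm)
      _ = 2 * m * Fintype.card Q := by ring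
end

section
/- Let A = (Q, Σ, δ) be a synchronizing automaton with Σ = {a_1, …, a_m}, m = 2^k for some k ≥ 1, and let B(A) = (Q × {0,1}^{≤ k}, {0,1}, δ') be the 2-letter automaton with δ'((q, w), x) = (q, wx) if |w| < k; δ'((q, w), 1) = (δ(q, a_{ℓ(w)}), λ) if |w| = k; and δ'((q, w), 0) = (q, w) if |w| = k, where ℓ : {0,1}^k → {1, …, m} is the lexicographic enumeration. Then rt(B(A)) ≥ (k + 1) · rt(A). -/
/-- The value of a binary string read most-significant-bit first.  For strings of a
fixed length `k`, lexicographic order (with `false < true`) agrees with the order of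
`bitVal`, so the lexicographic index `ℓ(w) ∈ {1, …, 2^k}` equals `bitVal w + 1`. -/
def bitVal : List Bool → ℕ
  | [] => 0
  | b :: t => (if b then 1 else 0) * 2 ^ t.length + bitVal t

/-- The length-`k` binary string whose `bitVal` is `n % 2^k`; i.e. `ℓ⁻¹(n+1)` for `n < 2^k`. -/
def bits : ℕ → ℕ → List Bool
  | 0, _ => []
  | k + 1, n => decide (2 ^ k ≤ n % 2 ^ (k + 1)) :: bits k n

/-- The transition function of the 2-letter automaton `B(A)` on `Q × {0,1}^{≤k}`:
if `|w| < k` the letter is appended; if `|w| = k`, letter `1` applies the letter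
`a_{ℓ(w)}` of `A` and resets the string to `λ`, while letter `0` does nothing. -/
def deltaB {Q : Type*} (k : ℕ) (δ : Q → Fin (2 ^ k) → Q) :
    Q × {w : List Bool // w.length ≤ k} → Bool →
      Q × {w : List Bool // w.length ≤ k} :=
  fun s x =>
    if h : s.2.val.length < k then
      (s.1, ⟨s.2.val ++ [x], by simpa using h⟩)
    else if x then
      (δ s.1 ⟨bitVal s.2.val % 2 ^ k, Nat.mod_lt _ (by positivity)⟩,
        ⟨[], by simp⟩)
    else s

def ell (k : ℕ) (b : List Bool) : Fin (2 ^ k) :=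
  ⟨bitVal b % 2 ^ k, Nat.mod_lt _ (by positivity)⟩

def decode (k : ℕ) : List Bool → List Bool → List (Fin (2 ^ k))
  | [], _ => []
  | x :: v, b =>
    if b.length < k then decode k v (b ++ [x])
    else if x then ell k b :: decode k v [] else decode k v b

def buf (k : ℕ) : List Bool → List Bool → List Bool
  | [], b => b
  | x :: v, b =>
    if b.length < k then buf k v (b ++ [x])
    else if x then buf k v [] else buf k v b

lemma buf_length (k : ℕ) : ∀ (v b : List Bool), b.length ≤ k → (buf k v b).length ≤ k
  | [], b, hb => hb
  | x :: v, b, hb => by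
    by_cases h : b.length < k
    · simpa [buf, h] using buf_length k v (b ++ [x]) (by simpa using h)
    · cases x <;> simp [buf, h] <;> [exact buf_length k v b hb; exact buf_length k v [] (by simp)]

lemma decode_length (k : ℕ) :
    ∀ (v b : List Bool), (k + 1) * (decode k v b).length ≤ b.length + v.length
  | [], b => by simp [decode]
  | x :: v, b => by
    by_cases h : b.length < k
    · have := decode_length k v (b ++ [x])
      simp only [decode, h, if_true] at *
      simp at this ⊢
      omega
    · cases x
      · have := decode_length k v b
        simp only [decode, h, if_false, Bool.false_eq_true] at *
        simp at this ⊢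
        omega
      · have := decode_length k v []
        have hk' : k ≤ b.length := le_of_not_gt h
        have key : (k + 1) * ((decode k v []).length + 1)
            = (k + 1) * (decode k v []).length + (k + 1) := by ring
        simp only [decode, h, if_false, if_true] at *
        simp at this ⊢
        omega

def deltaB' {Q : Type*} (k : ℕ) (δ : Q → Fin (2 ^ k) → Q) :
    Q × {w : List Bool // w.length ≤ k} → Bool →
      Q × {w : List Bool // w.length ≤ k} :=
  fun s x =>
    if h : s.2.val.length < k then
      (s.1, ⟨s.2.val ++ [x], by simpa using h⟩)
    else if x then
      (δ s.1 ⟨bitVal s.2.val % 2 ^ k, Nat.mod_lt _ (by positivity)⟩,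
        ⟨[], by simp⟩)
    else s

lemma act {Q : Type*} (k : ℕ) (δ : Q → Fin (2 ^ k) → Q) :
    ∀ (v b : List Bool) (hb : b.length ≤ k) (q : Q),
      wordAct (deltaB' k δ) (q, ⟨b, hb⟩) v
        = (wordAct δ q (decode k v b), ⟨buf k v b, buf_length k v b hb⟩)
  | [], b, hb, q => rfl
  | x :: v, b, hb, q => by
    by_cases h : b.length < k
    · have step : deltaB' k δ (q, ⟨b, hb⟩) x = (q, ⟨b ++ [x], by simpa using h⟩) := by
        simp [deltaB', h]
      show wordAct (deltaB' k δ) (deltaB' k δ (q, ⟨b, hb⟩) x) v = _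
      rw [step, act k δ v (b ++ [x]) (by simpa using h) q]
      simp [decode, buf, h]
    · cases x
      · have step : deltaB' k δ (q, ⟨b, hb⟩) false = (q, ⟨b, hb⟩) := by
          simp [deltaB', h]
        show wordAct (deltaB' k δ) (deltaB' k δ (q, ⟨b, hb⟩) false) v = _
        rw [step, act k δ v b hb q]
        simp [decode, buf, h]
      · have step : deltaB' k δ (q, ⟨b, hb⟩) true = (δ q (ell k b), ⟨[], by simp⟩) := by
          simp [deltaB', h, ell]
        show wordAct (deltaB' k δ) (deltaB' k δ (q, ⟨b, hb⟩) true) v = _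
        rw [step, act k δ v [] (by simp) (δ q (ell k b))]
        simp [decode, buf, h, wordAct]

lemma buf_append (k : ℕ) : ∀ (v1 v2 b : List Bool),
    buf k (v1 ++ v2) b = buf k v2 (buf k v1 b)
  | [], v2, b => rfl
  | x :: v1, v2, b => by
    by_cases h : b.length < k
    · simp only [List.cons_append, buf, h, if_true]; exact buf_append k v1 v2 _
    · cases x <;> simp only [List.cons_append, buf, h, if_true, if_false,
        Bool.false_eq_true] <;> exact buf_append k v1 v2 _

lemma decode_append (k : ℕ) : ∀ (v1 v2 b : List Bool),
    decode k (v1 ++ v2) b = decode k v1 b ++ decode k v2 (buf k v1 b)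
  | [], v2, b => rfl
  | x :: v1, v2, b => by
    by_cases h : b.length < k
    · simp only [List.cons_append, decode, buf, h, if_true]; exact decode_append k v1 v2 _
    · cases x
      · simp only [List.cons_append, decode, buf, h, if_false, Bool.false_eq_true]
        exact decode_append k v1 v2 _
      · simp only [List.cons_append, decode, buf, h, if_false, if_true]
        rw [decode_append k v1 v2 []]

lemma fill (k : ℕ) : ∀ (c b : List Bool), b.length + c.length ≤ k →
    decode k c b = [] ∧ buf k c b = b ++ c
  | [], b, _ => by simp [decode, buf]
  | x :: c, b, hc => by
    have h : b.length < k := by simp at hc; omega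
    have := fill k c (b ++ [x]) (by simp at hc ⊢; omega)
    simp only [decode, buf, h, if_true]
    exact ⟨this.1, by rw [this.2]; simp⟩

lemma bits_length : ∀ (k n : ℕ), (bits k n).length = k
  | 0, n => rfl
  | k + 1, n => by simp [bits, bits_length k n]

lemma bitVal_bits : ∀ (k n : ℕ), bitVal (bits k n) = n % 2 ^ k
  | 0, n => by simp [bits, bitVal, Nat.mod_one]
  | k + 1, n => by
    have ih := bitVal_bits k n
    have hmm : n % 2 ^ k = (n % 2 ^ (k + 1)) % 2 ^ k :=
      (Nat.mod_mod_of_dvd n (pow_dvd_pow 2 (Nat.le_succ k))).symm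
    have hlt : n % 2 ^ (k + 1) < 2 ^ (k + 1) := Nat.mod_lt _ (by positivity)
    simp only [bits, bitVal, bits_length, ih]
    set m := n % 2 ^ (k + 1) with hm
    rw [pow_succ] at hlt
    by_cases h : 2 ^ k ≤ m
    · have h2 : m % 2 ^ k = m - 2 ^ k := by
        rw [Nat.mod_eq_sub_mod h, Nat.mod_eq_of_lt (by omega)]
      simp [h, hmm, h2] <;> omega
    · have h2 : m % 2 ^ k = m := Nat.mod_eq_of_lt (lt_of_not_ge h)
      simp [h, hmm, h2]

lemma ell_bits (k : ℕ) (a : Fin (2 ^ k)) : ell k (bits k a.val) = a := by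
  apply Fin.ext
  simp [ell, bitVal_bits, Nat.mod_eq_of_lt a.isLt]

lemma full_true (k : ℕ) (b : List Bool) (hb : b.length = k) :
    decode k [true] b = [ell k b] ∧ buf k [true] b = [] := by
  constructor <;> simp [decode, buf, hb]

def enc (k : ℕ) : List (Fin (2 ^ k)) → List Bool
  | [] => []
  | a :: w => (bits k a.val ++ [true]) ++ enc k w

lemma enc_spec (k : ℕ) : ∀ (w : List (Fin (2 ^ k))),
    decode k (enc k w) [] = w ∧ buf k (enc k w) [] = []
  | [] => by simp [enc, decode, buf]
  | a :: w => by
    have hbl := bits_length k a.val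
    have hfill := fill k (bits k a.val) [] (by simp [hbl])
    have hfill1 : decode k (bits k a.val) [] = [] := hfill.1
    have hfill2 : buf k (bits k a.val) [] = bits k a.val := by simpa using hfill.2
    have hfull := full_true k (bits k a.val) hbl
    have ih := enc_spec k w
    have hb1 : buf k (bits k a.val ++ [true]) [] = [] := by
      rw [buf_append, hfill2, hfull.2]
    constructor
    · rw [enc, decode_append, hb1, ih.1, decode_append, hfill2, hfill1, hfull.1, ell_bits]
      simp
    · rw [enc, buf_append, hb1, ih.2]

lemma buf_replicate (k : ℕ) : ∀ (j : ℕ) (b : List Bool), b.length ≤ k →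
    (buf k (List.replicate j false) b).length = min k (b.length + j)
  | 0, b, hb => by simp [buf]; omega
  | j + 1, b, hb => by
    by_cases h : b.length < k
    · rw [List.replicate_succ]
      simp only [buf, h, if_true]
      rw [buf_replicate k j (b ++ [false]) (by simpa using h)]
      simp; omega
    · rw [List.replicate_succ]
      simp only [buf, h, if_false, Bool.false_eq_true]
      rw [buf_replicate k j b hb]
      omega

lemma encode_reset {Q : Type*} (k : ℕ) (δ : Q → Fin (2 ^ k) → Q)
    (w : List (Fin (2 ^ k))) (hw : IsResetWord δ w) :
    IsResetWord (deltaB' k δ) (List.replicate k false ++ ([true] ++ enc k w)) := by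
  have key : ∀ (b : List Bool) (hb : b.length ≤ k) (q : Q), ∃ p : Q,
      wordAct (deltaB' k δ) (q, ⟨b, hb⟩) (List.replicate k false ++ ([true] ++ enc k w))
        = (wordAct δ p w, ⟨[], by simp⟩) := by
    intro b hb q
    set b' := buf k (List.replicate k false) b with hb'
    have hb'len : b'.length = k := by
      have := buf_replicate k k b hb
      rw [← hb'] at this
      omega
    have hbuf : buf k (List.replicate k false ++ ([true] ++ enc k w)) b = [] := by
      rw [buf_append, ← hb', buf_append, (full_true k b' hb'len).2, (enc_spec k w).2]
    have hdec : decode k (List.replicate k false ++ ([true] ++ enc k w)) b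
        = decode k (List.replicate k false) b ++ ([ell k b'] ++ w) := by
      rw [decode_append, ← hb', decode_append, (full_true k b' hb'len).1,
        (full_true k b' hb'len).2, (enc_spec k w).1]
    refine ⟨wordAct δ q (decode k (List.replicate k false) b ++ [ell k b']), ?_⟩
    rw [act k δ _ b hb q]
    refine Prod.ext ?_ (Subtype.ext ?_)
    · show wordAct δ q (decode k (List.replicate k false ++ ([true] ++ enc k w)) b) = _
      rw [hdec]
      simp [wordAct, List.foldl_append]
    · exact hbuf
  rintro ⟨p, b, hb⟩ ⟨q, c, hc⟩
  obtain ⟨p', hp⟩ := key b hb p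
  obtain ⟨q', hq⟩ := key c hc q
  rw [hp, hq, hw p' q']

/-- The lower bound of the encoding lemma: `rt(B(A)) ≥ (k+1) · rt(A)`. -/
theorem encoded_reset_threshold_lower_bound {Q : Type} [Fintype Q] [Nonempty Q]
    (k : ℕ) (hk : 1 ≤ k) (δ : Q → Fin (2 ^ k) → Q) (hsync : Synchronizing δ) :
    (k + 1) * resetThreshold δ ≤ resetThreshold (deltaB k δ) := by
  obtain ⟨w, hw⟩ := hsync
  have hE := encode_reset k δ w hw
  have hfin : (k + 1) * resetThreshold δ ≤
      sInf {n : ℕ | ∃ v : List Bool, v.length = n ∧ IsResetWord (deltaB' k δ) v} := by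
    refine le_csInf ⟨_, _, rfl, hE⟩ ?_
    rintro n ⟨v, rfl, hv⟩
    have hu : IsResetWord δ (decode k v []) := by
      intro p q
      have hp := act k δ v [] (by simp) p
      have hq := act k δ v [] (by simp) q
      have h := hv (p, ⟨[], by simp⟩) (q, ⟨[], by simp⟩)
      rw [hp, hq] at h
      exact congrArg Prod.fst h
    have h1 : resetThreshold δ ≤ (decode k v []).length :=
      Nat.sInf_le ⟨decode k v [], rfl, hu⟩
    calc (k + 1) * resetThreshold δ ≤ (k + 1) * (decode k v []).length :=
          Nat.mul_le_mul_left _ h1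
      _ ≤ List.length ([] : List Bool) + v.length := decode_length k v []
      _ = v.length := by simp
  exact hfin
end

section
/- There exists a constant C > 0 such that for every n ≥ 1, when two functions a, b : {1, …, n} → {1, …, n} are chosen uniformly and independently at random, the probability that the automaton ({1, …, n}, {a, b}) has a subautomaton with fewer than n/(4e²) states (i.e. a nonempty subset of states closed under both a and b of size less than n/(4e²)) is at most C/n. Equivalently, with probability 1 − O(1/n), every subautomaton has at least n/(4e²) states. -/
open Finset

private lemma countFix (n : ℕ) (P : Finset (Fin n)) :
    (Finset.univ.filter fun f : Fin n → Fin n => ∀ q ∈ P, f q ∈ P).card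
      = P.card ^ P.card * n ^ (n - P.card) := by
  classical
  have h : (Finset.univ.filter fun f : Fin n → Fin n => ∀ q ∈ P, f q ∈ P)
      = Fintype.piFinset (fun a => if a ∈ P then P else Finset.univ) := by
    ext f
    simp only [Finset.mem_filter, Finset.mem_univ, true_and, Fintype.mem_piFinset]
    constructor
    · intro h a
      by_cases ha : a ∈ P
      · simpa [ha] using h a ha
      · simp [ha]
    · intro h q hq
      simpa [hq] using h q
  rw [h, Fintype.card_piFinset, ← Finset.prod_mul_prod_compl P]
  have h1 : ∏ a ∈ P, (if a ∈ P then P else (Finset.univ : Finset (Fin n))).card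
      = P.card ^ P.card := by
    rw [Finset.prod_congr rfl (fun a ha => by rw [if_pos ha]), Finset.prod_const]
  have h2 : ∏ a ∈ Pᶜ, (if a ∈ P then P else (Finset.univ : Finset (Fin n))).card
      = n ^ (n - P.card) := by
    rw [Finset.prod_congr rfl (fun a ha => by rw [if_neg (Finset.mem_compl.mp ha)]),
      Finset.prod_const, Finset.card_univ, Fintype.card_fin, Finset.card_compl,
      Fintype.card_fin]
  rw [h1, h2]

private lemma geomAux : ∀ n : ℕ, ∑ k ∈ Finset.Icc 1 n, ((1:ℝ)/2) ^ (k - 1) = 2 - 2 * (1/2) ^ n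
  | 0 => by norm_num
  | (m+1) => by
    rw [Finset.sum_Icc_succ_top (Nat.le_add_left 1 m), geomAux m]
    simp only [Nat.add_sub_cancel]
    ring

private lemma keyBound {n k : ℕ} (hn : 1 ≤ n) (hk : 1 ≤ k)
    (hsmall : (k : ℝ) < n / (4 * Real.exp 1 ^ 2)) :
    (n.choose k : ℝ) * ((k : ℝ) ^ k / (n : ℝ) ^ k) ^ 2
      ≤ Real.exp 1 / n * (1 / 2) ^ (k - 1) := by
  have hnp : (0:ℝ) < n := by exact_mod_cast hn
  have hkp : (0:ℝ) < k := by exact_mod_cast hk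
  have he : (0:ℝ) < Real.exp 1 := Real.exp_pos 1
  have h2e : (2:ℝ) ≤ Real.exp 1 := by nlinarith [Real.add_one_le_exp 1]
  have hf : (0:ℝ) < (Nat.factorial k : ℝ) := by exact_mod_cast k.factorial_pos
  have hchoose : (n.choose k : ℝ) ≤ (n:ℝ)^k / (Nat.factorial k : ℝ) := by
    rw [le_div_iff₀ hf]
    have h1 : Nat.factorial k * n.choose k ≤ n ^ k := by
      rw [← Nat.descFactorial_eq_factorial_mul_choose]
      exact Nat.descFactorial_le_pow n k
    calc (n.choose k : ℝ) * (Nat.factorial k : ℝ)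
        = ((Nat.factorial k * n.choose k : ℕ) : ℝ) := by push_cast; ring
      _ ≤ ((n ^ k : ℕ) : ℝ) := by exact_mod_cast h1
      _ = (n:ℝ)^k := by push_cast; ring
  have hexp : (k:ℝ)^k / (Nat.factorial k : ℝ) ≤ Real.exp 1 ^ k := by
    rw [Real.exp_one_pow]
    exact Real.pow_div_factorial_le_exp (x := (k:ℝ)) (le_of_lt hkp) k
  have hrat : Real.exp 1 * k / n ≤ 1 / (4 * Real.exp 1) := by
    rw [lt_div_iff₀ (by positivity)] at hsmall
    rw [div_le_div_iff₀ hnp (by positivity)]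
    nlinarith [he]
  have hratpos : (0:ℝ) ≤ Real.exp 1 * k / n := by positivity
  have hkle : (k:ℝ) ≤ 2^(k-1) := by
    have h1 : k - 1 < 2 ^ (k-1) := Nat.lt_two_pow_self (n := k-1)
    have h2 : k ≤ 2 ^ (k-1) := by omega
    exact_mod_cast h2
  have key : (k:ℝ) * (1/(4*Real.exp 1))^(k-1) ≤ (1/2:ℝ)^(k-1) := by
    calc (k:ℝ) * (1/(4*Real.exp 1))^(k-1)
        ≤ (2:ℝ)^(k-1) * (1/(4*Real.exp 1))^(k-1) := by
          apply mul_le_mul_of_nonneg_right hkle (by positivity)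
      _ = ((2:ℝ) * (1/(4*Real.exp 1)))^(k-1) := (mul_pow _ _ _).symm
      _ ≤ (1/2:ℝ)^(k-1) := by
          apply pow_le_pow_left₀ (by positivity)
          rw [mul_one_div, div_le_div_iff₀ (by positivity) (by norm_num)]
          nlinarith
  calc (n.choose k : ℝ) * ((k:ℝ)^k / (n:ℝ)^k)^2
      ≤ ((n:ℝ)^k / (Nat.factorial k : ℝ)) * ((k:ℝ)^k / (n:ℝ)^k)^2 := by
        apply mul_le_mul_of_nonneg_right hchoose (by positivity)
    _ = ((k:ℝ)^k / (Nat.factorial k : ℝ)) * ((k:ℝ)^k / (n:ℝ)^k) := by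
        field_simp
    _ ≤ Real.exp 1 ^ k * ((k:ℝ)^k / (n:ℝ)^k) := by
        apply mul_le_mul_of_nonneg_right hexp (by positivity)
    _ = (Real.exp 1 * k / n) ^ k := by
        rw [mul_div_assoc, mul_pow, div_pow]
    _ = (Real.exp 1 * k / n) ^ (k-1) * (Real.exp 1 * k / n) := by
        rw [← pow_succ]
        congr 1
        omega
    _ ≤ (1/(4*Real.exp 1))^(k-1) * (Real.exp 1 * k / n) := by
        apply mul_le_mul_of_nonneg_right (pow_le_pow_left₀ hratpos hrat _) hratpos
    _ = ((k:ℝ) * (1/(4*Real.exp 1))^(k-1)) * (Real.exp 1 / n) := by ring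
    _ ≤ (1/2:ℝ)^(k-1) * (Real.exp 1 / n) := by
        apply mul_le_mul_of_nonneg_right key (by positivity)
    _ = Real.exp 1 / n * (1/2)^(k-1) := mul_comm _ _

open scoped Classical in
/-- The probability, for a pair of transition functions `(a, b)` chosen uniformly and
independently among all maps `{1,…,n} → {1,…,n}`, that the resulting 2-letter
automaton has a subautomaton (a nonempty subset of states closed under both letters)
with fewer than `n / (4e²)` states. -/
noncomputable def probSmallSubautomaton (n : ℕ) : ℝ :=
  ((Finset.univ.filter fun fg : (Fin n → Fin n) × (Fin n → Fin n) =>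
      ∃ P : Finset (Fin n), P.Nonempty ∧
        (∀ q ∈ P, fg.1 q ∈ P ∧ fg.2 q ∈ P) ∧
        (P.card : ℝ) < n / (4 * Real.exp 1 ^ 2)).card : ℝ) /
    (Fintype.card ((Fin n → Fin n) × (Fin n → Fin n)) : ℝ)

/-- With probability `1 − O(1/n)`, every subautomaton of a uniformly random 2-letter
`n`-state automaton has at least `n / (4e²)` states: the probability of the opposite
event is at most `C / n` for an absolute constant `C > 0`. -/
theorem probSmallSubautomaton_le :
    ∃ C > (0 : ℝ), ∀ n : ℕ, 1 ≤ n → probSmallSubautomaton n ≤ C / n := by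
  refine ⟨2 * Real.exp 1, by positivity, fun n hn => ?_⟩
  have hnp : (0:ℝ) < n := by exact_mod_cast hn
  set N : ℝ := (n:ℝ)^n * (n:ℝ)^n with hNdef
  have hNpos : 0 < N := by positivity
  set S : Finset (Finset (Fin n)) := Finset.univ.filter
    (fun P : Finset (Fin n) => P.Nonempty ∧ (P.card : ℝ) < n / (4 * Real.exp 1 ^ 2)) with hS
  set E : Finset (Fin n) → Finset ((Fin n → Fin n) × (Fin n → Fin n)) := fun P =>
    Finset.univ.filter (fun fg => (∀ q ∈ P, fg.1 q ∈ P) ∧ (∀ q ∈ P, fg.2 q ∈ P)) with hE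
  have hEcard : ∀ P : Finset (Fin n),
      (E P).card = (P.card ^ P.card * n ^ (n - P.card))^2 := by
    intro P
    have h1 : E P = (Finset.univ.filter fun f : Fin n → Fin n => ∀ q ∈ P, f q ∈ P) ×ˢ
        (Finset.univ.filter fun f : Fin n → Fin n => ∀ q ∈ P, f q ∈ P) := by
      ext ⟨f, g⟩
      rw [hE]
      simp only [Finset.mem_filter, Finset.mem_univ, true_and, Finset.mem_product]
    rw [h1, Finset.card_product, countFix, sq]
  set Bad := (Finset.univ.filter fun fg : (Fin n → Fin n) × (Fin n → Fin n) =>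
      ∃ P : Finset (Fin n), P.Nonempty ∧
        (∀ q ∈ P, fg.1 q ∈ P ∧ fg.2 q ∈ P) ∧
        (P.card : ℝ) < n / (4 * Real.exp 1 ^ 2)) with hBad
  have hsub : Bad ⊆ S.biUnion E := by
    intro fg hfg
    rw [hBad, Finset.mem_filter] at hfg
    obtain ⟨-, P, hPne, hPcl, hPsmall⟩ := hfg
    apply Finset.mem_biUnion.mpr
    refine ⟨P, ?_, ?_⟩
    · rw [hS, Finset.mem_filter]
      exact ⟨Finset.mem_univ _, hPne, hPsmall⟩
    · rw [hE]
      simp only [Finset.mem_filter, Finset.mem_univ, true_and]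
      exact ⟨fun q hq => (hPcl q hq).1, fun q hq => (hPcl q hq).2⟩
  set w : ℕ → ℝ := fun k => ((k:ℝ)^k * (n:ℝ)^(n-k))^2 with hw
  have hwnonneg : ∀ k, 0 ≤ w k := fun k => by positivity
  have hcast : ∀ P : Finset (Fin n), ((E P).card : ℝ) = w P.card := by
    intro P
    rw [hEcard P, hw]
    push_cast
    ring
  have hmaps : ∀ P ∈ S, P.card ∈ Finset.Icc 1 n := by
    intro P hP
    rw [hS, Finset.mem_filter] at hP
    refine Finset.mem_Icc.mpr ⟨hP.2.1.card_pos, ?_⟩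
    simpa using Finset.card_le_univ P
  -- per-fiber bound
  have hfiber : ∀ k ∈ Finset.Icc 1 n,
      ∑ P ∈ S.filter (fun P => P.card = k), w P.card
        ≤ Real.exp 1 / n * (1/2:ℝ)^(k-1) * N := by
    intro k hk
    by_cases hne : (S.filter (fun P => P.card = k)).Nonempty
    · obtain ⟨P0, hP0⟩ := hne
      rw [Finset.mem_filter, hS, Finset.mem_filter] at hP0
      obtain ⟨⟨-, hP0ne, hP0small⟩, hP0card⟩ := hP0
      have hk1 : 1 ≤ k := hP0card ▸ hP0ne.card_pos
      have hkn : k ≤ n := by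
        rw [← hP0card]
        simpa using Finset.card_le_univ P0
      have hksmall : (k : ℝ) < n / (4 * Real.exp 1 ^ 2) := hP0card ▸ hP0small
      have hsum : ∑ P ∈ S.filter (fun P => P.card = k), w P.card
          = ((S.filter (fun P => P.card = k)).card : ℝ) * w k := by
        rw [Finset.sum_congr rfl (fun P hP => by
          rw [(Finset.mem_filter.mp hP).2]), Finset.sum_const, nsmul_eq_mul]
      have hcardle : (S.filter (fun P => P.card = k)).card ≤ n.choose k := by
        have hsub2 : S.filter (fun P => P.card = k) ⊆
            Finset.powersetCard k (Finset.univ : Finset (Fin n)) := by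
          intro P hP
          exact Finset.mem_powersetCard.mpr
            ⟨Finset.subset_univ P, (Finset.mem_filter.mp hP).2⟩
        have := Finset.card_le_card hsub2
        rwa [Finset.card_powersetCard, Finset.card_univ, Fintype.card_fin] at this
      have hwk : w k = ((k:ℝ)^k / (n:ℝ)^k)^2 * N := by
        simp only [hw, hNdef]
        rw [pow_sub₀ (n:ℝ) (ne_of_gt hnp) hkn]
        field_simp
      calc ∑ P ∈ S.filter (fun P => P.card = k), w P.card
          = ((S.filter (fun P => P.card = k)).card : ℝ) * w k := hsum
        _ ≤ (n.choose k : ℝ) * w k := by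
            apply mul_le_mul_of_nonneg_right _ (hwnonneg k)
            exact_mod_cast hcardle
        _ = ((n.choose k : ℝ) * ((k:ℝ)^k / (n:ℝ)^k)^2) * N := by rw [hwk]; ring
        _ ≤ (Real.exp 1 / n * (1/2:ℝ)^(k-1)) * N := by
            apply mul_le_mul_of_nonneg_right (keyBound hn hk1 hksmall) (le_of_lt hNpos)
    · rw [Finset.not_nonempty_iff_eq_empty] at hne
      rw [hne, Finset.sum_empty]
      positivity
  have hcard : (Bad.card : ℝ) ≤ 2 * Real.exp 1 / n * N := by
    calc (Bad.card : ℝ) ≤ ((S.biUnion E).card : ℝ) := by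
          exact_mod_cast Finset.card_le_card hsub
      _ ≤ ((∑ P ∈ S, (E P).card : ℕ) : ℝ) := by
          exact_mod_cast Finset.card_biUnion_le
      _ = ∑ P ∈ S, w P.card := by
          push_cast
          exact Finset.sum_congr rfl (fun P _ => hcast P)
      _ = ∑ k ∈ Finset.Icc 1 n, ∑ P ∈ S.filter (fun P => P.card = k), w P.card := by
          rw [Finset.sum_fiberwise_of_maps_to hmaps]
      _ ≤ ∑ k ∈ Finset.Icc 1 n, Real.exp 1 / n * (1/2:ℝ)^(k-1) * N :=
          Finset.sum_le_sum hfiber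
      _ = (Real.exp 1 / n * N) * ∑ k ∈ Finset.Icc 1 n, ((1:ℝ)/2)^(k-1) := by
          rw [Finset.mul_sum]
          exact Finset.sum_congr rfl (fun k _ => by ring)
      _ ≤ (Real.exp 1 / n * N) * 2 := by
          apply mul_le_mul_of_nonneg_left _ (by positivity)
          rw [geomAux n]
          have : (0:ℝ) ≤ (1/2:ℝ)^n := by positivity
          linarith
      _ = 2 * Real.exp 1 / n * N := by ring
  have hN : (Fintype.card ((Fin n → Fin n) × (Fin n → Fin n)) : ℝ) = N := by
    rw [hNdef]
    simp only [Fintype.card_prod, Fintype.card_fun, Fintype.card_fin]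
    push_cast
    ring
  have hfinal : (Bad.card : ℝ) / (Fintype.card ((Fin n → Fin n) × (Fin n → Fin n)) : ℝ)
      ≤ 2 * Real.exp 1 / n := by
    rw [hN, div_le_div_iff₀ hNpos hnp]
    calc (Bad.card : ℝ) * n ≤ (2 * Real.exp 1 / n * N) * n :=
          mul_le_mul_of_nonneg_right hcard (le_of_lt hnp)
      _ = 2 * Real.exp 1 * N := by field_simp
  -- identify probSmallSubautomaton with Bad.card / N, modulo decidability instances
  rw [probSmallSubautomaton]
  convert hfinal using 3
end
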